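/- Fix an index i and positive real numbers q_i, q_{i+1}, e. Define ẽ = e·q_i/(e + q_{i+1}), q̃_i = q_{i+1}·q_i/(e + q_{i+1}), q̃_{i+1} = e + q_{i+1}. Then ẽ, q̃_i, q̃_{i+1} are positive and the original variables are recovered by the subtraction-free formulas e = ẽ·q̃_{i+1}/(ẽ + q̃_i), q_i = ẽ + q̃_i, and q_{i+1} = q̃_i·q̃_{i+1}/(ẽ + q̃_i); that is, the two rational maps (e, q_i, q_{i+1}) ↦ (ẽ, q̃_i, q̃_{i+1}) and (ẽ, q̃_i, q̃_{i+1}) ↦ (e, q_i, q_{i+1}) given by these formulas are mutually inverse bijections on triples of positive reals. -/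
import Mathlib

/-- the elementary birational step and its inverse are mutually inverse
subtraction-free bijections on positive real triples. -/
theorem stmt_4 (i : ℕ) (e qi qi1 : ℝ) (he : 0 < e) (hqi : 0 < qi) (hqi1 : 0 < qi1) :
    let et : ℝ := e * qi / (e + qi1)
    let qti : ℝ := qi1 * qi / (e + qi1)
    let qti1 : ℝ := e + qi1
    ((0 < et ∧ 0 < qti ∧ 0 < qti1) ∧
      e = et * qti1 / (et + qti) ∧ qi = et + qti ∧ qi1 = qti * qti1 / (et + qti)) ∧
    ∀ e' q0' q1' : ℝ, 0 < e' → 0 < q0' → 0 < q1' →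
      let eb : ℝ := e' * q1' / (e' + q0')
      let qb0 : ℝ := e' + q0'
      let qb1 : ℝ := q0' * q1' / (e' + q0')
      (0 < eb ∧ 0 < qb0 ∧ 0 < qb1) ∧
      e' = eb * qb0 / (eb + qb1) ∧ q0' = qb1 * qb0 / (eb + qb1) ∧ q1' = eb + qb1 := by
  have hs : (0:ℝ) < e + qi1 := by linarith
  constructor
  · refine ⟨⟨by positivity, by positivity, hs⟩, ?_, ?_, ?_⟩ <;>
      · field_simp
        try ring
  · intro e' q0' q1' he' h0 h1
    have hs' : (0:ℝ) < e' + q0' := by linarith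
    refine ⟨⟨by positivity, hs', by positivity⟩, ?_, ?_, ?_⟩ <;>
      · field_simp
        try ring
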